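/- Let k ∈ ℝ, 0 ≤ σ < (k−1)/2, set β = (k−1)/2 − σ, and let δ > 0. Define f : (0,∞) → ℝ by f(ρ) = ((ρ/δ)/(1 + ρ/δ))^{2β} · ρ^{2σ}. Then for every ρ > 0, writing t = ρ/δ, one has −f''(ρ) + ((k−2)/ρ) f'(ρ) = 2β (f(ρ)/ρ²) · (t/(1+t)) · ( (2β+1)/(1+t) + 2σ ), and in particular −f''(ρ) + ((k−2)/ρ) f'(ρ) ≥ 4βσ (f(ρ)/ρ²) · (ρ/δ)/(1 + ρ/δ) ≥ 0. -/

import Mathlib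

set_option maxHeartbeats 1000000

/-- Auxiliary derivative computation: `x ↦ x^c (δ+x)^e` for `x > 0`, `δ > 0`. -/
lemma radial_weight_aux (δ c e : ℝ) (hδ : 0 < δ) {ρ : ℝ} (hρ : 0 < ρ) :
    HasDerivAt (fun x : ℝ => x ^ c * (δ + x) ^ e)
      (c * ρ ^ (c - 1) * (δ + ρ) ^ e + ρ ^ c * (e * (δ + ρ) ^ (e - 1))) ρ := by
  have h1 : HasDerivAt (fun x : ℝ => x ^ c) (c * ρ ^ (c - 1)) ρ :=
    Real.hasDerivAt_rpow_const (Or.inl hρ.ne')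
  have hδρ : (0:ℝ) < δ + ρ := by linarith
  have h2 : HasDerivAt (fun x : ℝ => (δ + x) ^ e) (e * (δ + ρ) ^ (e - 1) * 1) ρ :=
    (Real.hasDerivAt_rpow_const (Or.inl hδρ.ne')).comp ρ ((hasDerivAt_id ρ).const_add δ)
  have := h1.mul h2
  convert this using 1
  · rfl
  · rfl
  · rfl
  ring

/-- For `0 ≤ σ < (k-1)/2` and `β = (k-1)/2 - σ`, the test weight
`f(ρ) = ((ρ/δ)/(1+ρ/δ))^{2β} ρ^{2σ}` satisfies, for every `ρ > 0` with `t = ρ/δ`,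
`-f'' + ((k-2)/ρ) f' = 2β (f/ρ²) (t/(1+t)) ((2β+1)/(1+t) + 2σ)`, and in particular
`-f'' + ((k-2)/ρ) f' ≥ 4βσ (f/ρ²) (t/(1+t)) ≥ 0`. -/
theorem radial_weight_nonneg (k σ δ : ℝ) (hσ0 : 0 ≤ σ) (hσ : σ < (k - 1) / 2)
    (hδ : 0 < δ) (β : ℝ) (hβ : β = (k - 1) / 2 - σ)
    (f : ℝ → ℝ)
    (hf : ∀ ρ : ℝ, f ρ = ((ρ / δ) / (1 + ρ / δ)) ^ (2 * β) * ρ ^ (2 * σ)) :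
    ∀ ρ > (0 : ℝ),
      (-(deriv (deriv f) ρ) + (k - 2) / ρ * deriv f ρ =
        2 * β * (f ρ / ρ ^ 2) * ((ρ / δ) / (1 + ρ / δ)) *
          ((2 * β + 1) / (1 + ρ / δ) + 2 * σ)) ∧
      4 * β * σ * (f ρ / ρ ^ 2) * ((ρ / δ) / (1 + ρ / δ)) ≤
        -(deriv (deriv f) ρ) + (k - 2) / ρ * deriv f ρ ∧
      0 ≤ 4 * β * σ * (f ρ / ρ ^ 2) * ((ρ / δ) / (1 + ρ / δ)) := by
  set c : ℝ := 2 * β + 2 * σ with hc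
  set e : ℝ := -(2 * β) with he
  have hk : k = 2 * β + 2 * σ + 1 := by rw [hβ]; ring
  have hβ0 : 0 < β := by rw [hβ]; linarith
  -- on (0,∞), f coincides with x ↦ x^c (δ+x)^e
  have hfeq : ∀ x ∈ Set.Ioi (0:ℝ), f x = x ^ c * (δ + x) ^ e := by
    intro x hx
    have hx0 : (0:ℝ) < x := hx
    have hδx : (0:ℝ) < δ + x := by linarith
    have h1 : (x / δ) / (1 + x / δ) = x / (δ + x) := by
      have hd : δ * (1 + x / δ) = δ + x := by field_simp
      rw [div_div, hd]
    rw [hf x, h1, hc, he, Real.rpow_add hx0, Real.div_rpow hx0.le hδx.le,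
      Real.rpow_neg hδx.le, div_eq_mul_inv]
    ring
  -- first derivative on (0,∞)
  have hG : ∀ x ∈ Set.Ioi (0:ℝ), deriv f x =
      c * x ^ (c - 1) * (δ + x) ^ e + x ^ c * (e * (δ + x) ^ (e - 1)) := by
    intro x hx
    have hx0 : (0:ℝ) < x := hx
    have hev : f =ᶠ[nhds x] (fun y : ℝ => y ^ c * (δ + y) ^ e) :=
      Filter.eventuallyEq_of_mem (isOpen_Ioi.mem_nhds hx) hfeq
    rw [hev.deriv_eq, (radial_weight_aux δ c e hδ hx0).deriv]
  intro ρ hρ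
  have hδρ : (0:ℝ) < δ + ρ := by linarith
  -- second derivative at ρ
  have hGdd : HasDerivAt
      (fun x : ℝ => c * x ^ (c - 1) * (δ + x) ^ e + x ^ c * (e * (δ + x) ^ (e - 1)))
      (c * ((c-1) * ρ ^ (c-1-1) * (δ+ρ) ^ e + ρ ^ (c-1) * (e * (δ+ρ) ^ (e-1)))
        + e * (c * ρ ^ (c-1) * (δ+ρ) ^ (e-1) + ρ ^ c * ((e-1) * (δ+ρ) ^ (e-1-1)))) ρ := by
    have h1 := (radial_weight_aux δ (c-1) e hδ hρ).const_mul c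
    have h2 := (radial_weight_aux δ c (e-1) hδ hρ).const_mul e
    have h := h1.add h2
    exact h.congr_of_eventuallyEq (Filter.Eventually.of_forall fun x => by simp only [Pi.add_apply]; ring)
  have hdd : deriv (deriv f) ρ =
      c * ((c-1) * ρ ^ (c-1-1) * (δ+ρ) ^ e + ρ ^ (c-1) * (e * (δ+ρ) ^ (e-1)))
        + e * (c * ρ ^ (c-1) * (δ+ρ) ^ (e-1) + ρ ^ c * ((e-1) * (δ+ρ) ^ (e-1-1))) := by
    have hev : deriv f =ᶠ[nhds ρ]
        (fun x : ℝ => c * x ^ (c - 1) * (δ + x) ^ e + x ^ c * (e * (δ + x) ^ (e - 1))) :=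
      Filter.eventuallyEq_of_mem (isOpen_Ioi.mem_nhds hρ) hG
    rw [hev.deriv_eq, hGdd.deriv]
  -- rewrite rpow powers in terms of X := ρ^c, Y := (δ+ρ)^e
  set X : ℝ := ρ ^ c with hX
  set Y : ℝ := (δ + ρ) ^ e with hY
  have e1 : ρ ^ (c-1) = X / ρ := by rw [hX, Real.rpow_sub hρ, Real.rpow_one]
  have e2 : ρ ^ (c-1-1) = X / ρ / ρ := by rw [Real.rpow_sub hρ, Real.rpow_one, e1]
  have e3 : (δ+ρ) ^ (e-1) = Y / (δ+ρ) := by rw [hY, Real.rpow_sub hδρ, Real.rpow_one]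
  have e4 : (δ+ρ) ^ (e-1-1) = Y / (δ+ρ) / (δ+ρ) := by
    rw [Real.rpow_sub hδρ, Real.rpow_one, e3]
  have hfρ : f ρ = X * Y := hfeq ρ hρ
  have hd1 : deriv f ρ = c * (X / ρ) * Y + X * (e * (Y / (δ+ρ))) := by
    rw [hG ρ hρ, e1, e3]
  have h1t : 1 + ρ / δ = (δ + ρ) / δ := by field_simp
  have hρ' : ρ ≠ 0 := hρ.ne'
  have hδρ' : δ + ρ ≠ 0 := hδρ.ne'
  -- the main identity
  have main : -(deriv (deriv f) ρ) + (k - 2) / ρ * deriv f ρ =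
      2 * β * (f ρ / ρ ^ 2) * ((ρ / δ) / (1 + ρ / δ)) *
        ((2 * β + 1) / (1 + ρ / δ) + 2 * σ) := by
    rw [hdd, hd1, e1, e2, e3, e4, hfρ, hk, h1t, he]
    field_simp
    ring
  have hT : 0 ≤ (ρ / δ) / (1 + ρ / δ) := by positivity
  have hf0 : 0 ≤ f ρ := by
    rw [hfρ, hX, hY]
    positivity
  have hF : (0:ℝ) ≤ f ρ / ρ ^ 2 := by positivity
  refine ⟨main, ?_, ?_⟩
  · rw [main]
    have key : 0 ≤ 2 * β * (f ρ / ρ ^ 2) * ((ρ / δ) / (1 + ρ / δ)) *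
        ((2*β+1) / (1 + ρ / δ)) := by
      have h1t0 : (0:ℝ) < 1 + ρ / δ := by positivity
      have h2 : (0:ℝ) ≤ (2*β+1) / (1 + ρ / δ) := by positivity
      exact mul_nonneg (mul_nonneg (mul_nonneg (by linarith : (0:ℝ) ≤ 2 * β) hF) hT) h2
    have expand : 2 * β * (f ρ / ρ ^ 2) * ((ρ / δ) / (1 + ρ / δ)) *
          ((2 * β + 1) / (1 + ρ / δ) + 2 * σ) =
        2 * β * (f ρ / ρ ^ 2) * ((ρ / δ) / (1 + ρ / δ)) * ((2*β+1) / (1 + ρ / δ))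
          + 4 * β * σ * (f ρ / ρ ^ 2) * ((ρ / δ) / (1 + ρ / δ)) := by ring
    rw [expand]
    linarith
  · exact mul_nonneg (mul_nonneg (mul_nonneg
      (mul_nonneg (by norm_num : (0:ℝ) ≤ 4) hβ0.le) hσ0) hF) hT
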